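/- Let p, q ≥ 1 be integers. Let λ = (λ_1, …, λ_p) be a weakly decreasing sequence of integers with q ≥ λ_1 and λ_p ≥ 0, and let μ = (μ_1, …, μ_q) be a weakly decreasing sequence of integers with p ≥ μ_1 and μ_q ≥ 0. Suppose λ is not the transpose of μ, i.e., it is not the case that λ_i = #{ j ∈ {1,…,q} : μ_j ≥ i } for all i = 1, …, p. Then the sequence β ∈ ℤ^{p+q} defined by β_i = (p − i + 1) − λ_{p−i+1} for 1 ≤ i ≤ p and β_{p+j} = μ_j − (j − 1) for 1 ≤ j ≤ q (i.e., β = (p − λ_p, (p−1) − λ_{p−1}, …, 1 − λ_1, μ_1, μ_2 − 1, …, μ_q − q + 1)) has at least two equal entries. -/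

import Mathlib

private lemma bbw_chain_le {f : ℕ → ℤ} {p : ℕ} (h : ∀ i, 1 ≤ i → i < p → f (i + 1) ≤ f i) :
    ∀ k i, 1 ≤ i → i ≤ k → k ≤ p → f k ≤ f i := by
  intro k
  induction k with
  | zero => intro i h1 h2 _; omega
  | succ n ih =>
    intro i h1 h2 h3
    rcases Nat.eq_or_lt_of_le h2 with rfl | hlt
    · exact le_refl _
    · exact (h n (by omega) (by omega)).trans (ih i h1 (by omega) (by omega))

/-- Borel–Bott–Weil vanishing criterion (combinatorial core): if the partition `l`
(with `p` parts, each at most `q`) is not the transpose of the partition `m` (with `q`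
parts, each at most `p`), then the sequence
`β = (p - l p, (p-1) - l (p-1), …, 1 - l 1, m 1, m 2 - 1, …, m q - q + 1)`
has at least two equal entries. -/
theorem bbw_vanishing_two_equal_entries
    (p q : ℕ) (hp : 1 ≤ p) (hq : 1 ≤ q)
    (l m : ℕ → ℤ)
    (hl_dec : ∀ i, 1 ≤ i → i < p → l (i + 1) ≤ l i)
    (hl_top : l 1 ≤ (q : ℤ))
    (hl_bot : 0 ≤ l p)
    (hm_dec : ∀ j, 1 ≤ j → j < q → m (j + 1) ≤ m j)
    (hm_top : m 1 ≤ (p : ℤ))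
    (hm_bot : 0 ≤ m q)
    (hne : ¬ (∀ i, 1 ≤ i → i ≤ p →
      l i = (((Finset.Icc 1 q).filter (fun j => (i : ℤ) ≤ m j)).card : ℤ)))
    (β : ℕ → ℤ)
    (hβ₁ : ∀ i, 1 ≤ i → i ≤ p → β i = ((p : ℤ) - (i : ℤ) + 1) - l (p - i + 1))
    (hβ₂ : ∀ j, 1 ≤ j → j ≤ q → β (p + j) = m j - ((j : ℤ) - 1)) :
    ∃ i j, 1 ≤ i ∧ i ≤ p + q ∧ 1 ≤ j ∧ j ≤ p + q ∧ i ≠ j ∧ β i = β j := by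
  by_contra hcon
  push_neg at hcon
  set a : ℕ → ℤ := fun k => (k : ℤ) - l k with ha
  set b : ℕ → ℤ := fun j => m j - (j : ℤ) + 1 with hb
  have hl_mono : ∀ i k, 1 ≤ i → i ≤ k → k ≤ p → l k ≤ l i :=
    fun i k h1 h2 h3 => bbw_chain_le hl_dec k i h1 h2 h3
  have hm_mono : ∀ i k, 1 ≤ i → i ≤ k → k ≤ q → m k ≤ m i :=
    fun i k h1 h2 h3 => bbw_chain_le hm_dec k i h1 h2 h3
  have hl_nonneg : ∀ i, 1 ≤ i → i ≤ p → 0 ≤ l i :=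
    fun i h1 h2 => hl_bot.trans (hl_mono i p h1 h2 le_rfl)
  have hl_le : ∀ i, 1 ≤ i → i ≤ p → l i ≤ (q : ℤ) :=
    fun i h1 h2 => (hl_mono 1 i le_rfl h1 h2).trans hl_top
  have hm_nonneg : ∀ j, 1 ≤ j → j ≤ q → 0 ≤ m j :=
    fun j h1 h2 => hm_bot.trans (hm_mono j q h1 h2 le_rfl)
  have hm_le : ∀ j, 1 ≤ j → j ≤ q → m j ≤ (p : ℤ) :=
    fun j h1 h2 => (hm_mono 1 j le_rfl h1 h2).trans hm_top
  have ha_le : ∀ i k, 1 ≤ i → i ≤ k → k ≤ p → a i ≤ a k := by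
    intro i k h1 h2 h3
    have h4 := hl_mono i k h1 h2 h3
    have h5 : (i : ℤ) ≤ (k : ℤ) := by exact_mod_cast h2
    simp only [ha]; omega
  have ha_mono : ∀ i k, 1 ≤ i → i < k → k ≤ p → a i < a k := by
    intro i k h1 h2 h3
    have h4 := hl_mono i k h1 (le_of_lt h2) h3
    have h5 : (i : ℤ) < (k : ℤ) := by exact_mod_cast h2
    simp only [ha]; omega
  have hb_anti : ∀ j j', 1 ≤ j → j < j' → j' ≤ q → b j' < b j := by
    intro j j' h1 h2 h3
    have h4 := hm_mono j j' h1 (le_of_lt h2) h3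
    have h5 : (j : ℤ) < (j' : ℤ) := by exact_mod_cast h2
    simp only [hb]; omega
  have hβa : ∀ n, 1 ≤ n → n ≤ p → β n = a (p + 1 - n) := by
    intro n h1 h2
    rw [hβ₁ n h1 h2]
    have e1 : p - n + 1 = p + 1 - n := by omega
    have e2 : ((p + 1 - n : ℕ) : ℤ) = (p : ℤ) + 1 - (n : ℤ) := by
      have : (n : ℤ) ≤ (p : ℤ) := by exact_mod_cast h2
      omega
    simp only [ha, e1, e2]; ring
  have hβb : ∀ n, p + 1 ≤ n → n ≤ p + q → β n = b (n - p) := by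
    intro n h1 h2
    have h3 := hβ₂ (n - p) (by omega) (by omega)
    rw [show p + (n - p) = n from by omega] at h3
    rw [h3]; simp only [hb]; ring
  have hbound : ∀ n, 1 ≤ n → n ≤ p + q → (1 : ℤ) - q ≤ β n ∧ β n ≤ p := by
    intro n h1 h2
    by_cases hnp : n ≤ p
    · rw [hβa n h1 hnp]
      have hk1 : 1 ≤ p + 1 - n := by omega
      have hk2 : p + 1 - n ≤ p := by omega
      have h3 := hl_nonneg _ hk1 hk2
      have h4 := hl_le _ hk1 hk2
      have h5 : (1 : ℤ) ≤ ((p + 1 - n : ℕ) : ℤ) := by exact_mod_cast hk1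
      have h6 : ((p + 1 - n : ℕ) : ℤ) ≤ (p : ℤ) := by exact_mod_cast hk2
      simp only [ha]; omega
    · rw [hβb n (by omega) h2]
      have hk1 : 1 ≤ n - p := by omega
      have hk2 : n - p ≤ q := by omega
      have h3 := hm_nonneg _ hk1 hk2
      have h4 := hm_le _ hk1 hk2
      have h5 : (1 : ℤ) ≤ ((n - p : ℕ) : ℤ) := by exact_mod_cast hk1
      have h6 : ((n - p : ℕ) : ℤ) ≤ (q : ℤ) := by exact_mod_cast hk2
      simp only [hb]; omega
  set D := Finset.Icc 1 (p + q) with hD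
  set S := Finset.Icc ((1 : ℤ) - q) (p : ℤ) with hS
  have hinj : Set.InjOn β (D : Set ℕ) := by
    intro x hx y hy hxy
    by_contra hne'
    simp only [hD, Finset.coe_Icc, Set.mem_Icc] at hx hy
    exact hcon x y hx.1 hx.2 hy.1 hy.2 hne' hxy
  have hScard : S.card = p + q := by
    rw [hS, Int.card_Icc]; omega
  have hDcard : D.card = p + q := by
    rw [hD, Nat.card_Icc]; omega
  have himage : D.image β = S := by
    apply Finset.eq_of_subset_of_card_le
    · intro v hv
      simp only [Finset.mem_image] at hv
      obtain ⟨n, hn, rfl⟩ := hv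
      simp only [hD, Finset.mem_Icc] at hn
      have := hbound n hn.1 hn.2
      simp only [hS, Finset.mem_Icc]
      exact this
    · rw [hScard, Finset.card_image_of_injOn hinj, hDcard]
  have master : ∀ (P : ℤ → Prop) [DecidablePred P],
      (S.filter P).card = ((Finset.Icc 1 p).filter (fun k => P (a k))).card
        + ((Finset.Icc 1 q).filter (fun j => P (b j))).card := by
    intro P _
    have h1 : S.filter P = (D.filter (fun n => P (β n))).image β := by
      rw [← himage, Finset.filter_image]
    have h2 : (S.filter P).card = (D.filter (fun n => P (β n))).card := by
      rw [h1]
      exact Finset.card_image_of_injOn (hinj.mono (by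
        intro x hx
        exact Finset.filter_subset _ _ hx))
    rw [h2]
    have hsplit : D.filter (fun n => P (β n)) =
        ((Finset.Icc 1 p).filter (fun n => P (β n))) ∪
        ((Finset.Icc (p + 1) (p + q)).filter (fun n => P (β n))) := by
      rw [← Finset.filter_union]
      congr 1
      ext n
      simp only [hD, Finset.mem_Icc, Finset.mem_union]
      omega
    rw [hsplit, Finset.card_union_of_disjoint]
    · congr 1
      · apply Finset.card_nbij' (fun n => p + 1 - n) (fun k => p + 1 - k)
        · intro n hn
          simp only [Finset.mem_coe, Finset.mem_filter, Finset.mem_Icc] at hn ⊢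
          obtain ⟨⟨hn1, hn2⟩, hn3⟩ := hn
          rw [hβa n hn1 hn2] at hn3
          exact ⟨⟨by omega, by omega⟩, hn3⟩
        · intro k hk
          simp only [Finset.mem_coe, Finset.mem_filter, Finset.mem_Icc] at hk ⊢
          obtain ⟨⟨hk1, hk2⟩, hk3⟩ := hk
          refine ⟨⟨by omega, by omega⟩, ?_⟩
          rw [hβa (p + 1 - k) (by omega) (by omega)]
          rw [show p + 1 - (p + 1 - k) = k from by omega]
          exact hk3
        · intro n hn
          simp only [Finset.mem_coe, Finset.mem_filter, Finset.mem_Icc] at hn ⊢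
          omega
        · intro k hk
          simp only [Finset.mem_coe, Finset.mem_filter, Finset.mem_Icc] at hk ⊢
          omega
      · apply Finset.card_nbij' (fun n => n - p) (fun j => p + j)
        · intro n hn
          simp only [Finset.mem_coe, Finset.mem_filter, Finset.mem_Icc] at hn ⊢
          obtain ⟨⟨hn1, hn2⟩, hn3⟩ := hn
          rw [hβb n hn1 hn2] at hn3
          exact ⟨⟨by omega, by omega⟩, hn3⟩
        · intro j hj
          simp only [Finset.mem_coe, Finset.mem_filter, Finset.mem_Icc] at hj ⊢
          obtain ⟨⟨hj1, hj2⟩, hj3⟩ := hj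
          refine ⟨⟨by omega, by omega⟩, ?_⟩
          rw [hβb (p + j) (by omega) (by omega)]
          rw [show p + j - p = j from by omega]
          exact hj3
        · intro n hn
          simp only [Finset.mem_coe, Finset.mem_filter, Finset.mem_Icc] at hn ⊢
          omega
        · intro j hj
          simp only [Finset.mem_coe, Finset.mem_filter, Finset.mem_Icc] at hj ⊢
          omega
    · rw [Finset.disjoint_left]
      intro n hn hn'
      simp only [Finset.mem_filter, Finset.mem_Icc] at hn hn'
      omega
  -- count for the first family
  have countF : ∀ i, 1 ≤ i → i ≤ p →
      ((((Finset.Icc 1 q).filter (fun j => a i < b j)).card : ℤ)) = l i := by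
    intro i h1 h2
    have hm' := master (fun v => a i < v)
    have hli0 := hl_nonneg i h1 h2
    have hliq := hl_le i h1 h2
    have hiz1 : (1 : ℤ) ≤ (i : ℤ) := by exact_mod_cast h1
    have hizp : (i : ℤ) ≤ (p : ℤ) := by exact_mod_cast h2
    have hfS : S.filter (fun v => a i < v) = Finset.Icc (a i + 1) (p : ℤ) := by
      ext v
      simp only [hS, Finset.mem_filter, Finset.mem_Icc, ha]
      omega
    have hfA : (Finset.Icc 1 p).filter (fun k => a i < a k) = Finset.Icc (i + 1) p := by
      ext k
      simp only [Finset.mem_filter, Finset.mem_Icc]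
      constructor
      · rintro ⟨⟨hk1, hk2⟩, hak⟩
        refine ⟨?_, hk2⟩
        by_contra hki
        push_neg at hki
        exact absurd hak (not_lt.2 (ha_le k i hk1 (by omega) h2))
      · rintro ⟨hk1, hk2⟩
        exact ⟨⟨by omega, hk2⟩, ha_mono i k h1 (by omega) hk2⟩
    rw [hfS, hfA, Int.card_Icc, Nat.card_Icc] at hm'
    have hai : a i = (i : ℤ) - l i := rfl
    omega
  -- count for the second family
  have countG : ∀ j, 1 ≤ j → j ≤ q →
      ((((Finset.Icc 1 p).filter (fun k => a k < b j)).card : ℤ)) = m j := by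
    intro j h1 h2
    have hm' := master (fun v => v < b j)
    have hmj0 := hm_nonneg j h1 h2
    have hmjp := hm_le j h1 h2
    have hjz1 : (1 : ℤ) ≤ (j : ℤ) := by exact_mod_cast h1
    have hjzq : (j : ℤ) ≤ (q : ℤ) := by exact_mod_cast h2
    have hfS : S.filter (fun v => v < b j) = Finset.Icc ((1 : ℤ) - q) (b j - 1) := by
      ext v
      simp only [hS, Finset.mem_filter, Finset.mem_Icc, hb]
      omega
    have hfB : (Finset.Icc 1 q).filter (fun j' => b j' < b j) = Finset.Icc (j + 1) q := by
      ext j'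
      simp only [Finset.mem_filter, Finset.mem_Icc]
      constructor
      · rintro ⟨⟨hk1, hk2⟩, hbk⟩
        refine ⟨?_, hk2⟩
        by_contra hkj
        push_neg at hkj
        rcases Nat.eq_or_lt_of_le (by omega : j' ≤ j) with rfl | hlt
        · exact absurd hbk (lt_irrefl _)
        · exact absurd hbk (not_lt.2 (le_of_lt (hb_anti j' j hk1 hlt h2)))
      · rintro ⟨hk1, hk2⟩
        exact ⟨⟨by omega, hk2⟩, hb_anti j j' h1 (by omega) hk2⟩
    rw [hfS, hfB, Int.card_Icc, Nat.card_Icc] at hm'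
    have hbj : b j = m j - (j : ℤ) + 1 := rfl
    omega
  -- the key equivalence
  have hH : ∀ i j, 1 ≤ i → i ≤ p → 1 ≤ j → j ≤ q → (a i < b j ↔ (i : ℤ) ≤ m j) := by
    intro i j hi1 hi2 hj1 hj2
    have hM := countG j hj1 hj2
    constructor
    · intro hab
      have hsub : Finset.Icc 1 i ⊆ (Finset.Icc 1 p).filter (fun k => a k < b j) := by
        intro k hk
        simp only [Finset.mem_Icc] at hk
        simp only [Finset.mem_filter, Finset.mem_Icc]
        exact ⟨⟨hk.1, by omega⟩, lt_of_le_of_lt (ha_le k i hk.1 hk.2 hi2) hab⟩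
      have hcard := Finset.card_le_card hsub
      rw [Nat.card_Icc] at hcard
      omega
    · intro him
      by_contra hab
      push_neg at hab
      have hsub : (Finset.Icc 1 p).filter (fun k => a k < b j) ⊆ Finset.Icc 1 (i - 1) := by
        intro k hk
        simp only [Finset.mem_filter, Finset.mem_Icc] at hk
        simp only [Finset.mem_Icc]
        refine ⟨hk.1.1, ?_⟩
        by_contra hki
        push_neg at hki
        exact absurd hk.2 (not_lt.2 (hab.trans (ha_le i k hi1 (by omega) hk.1.2)))
      have hcard := Finset.card_le_card hsub
      rw [Nat.card_Icc] at hcard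
      omega
  -- conclude
  apply hne
  intro i hi1 hi2
  have heq : (Finset.Icc 1 q).filter (fun j => (i : ℤ) ≤ m j)
      = (Finset.Icc 1 q).filter (fun j => a i < b j) := by
    apply Finset.filter_congr
    intro j hj
    simp only [Finset.mem_Icc] at hj
    exact (hH i j hi1 hi2 hj.1 hj.2).symm
  rw [heq]
  exact (countF i hi1 hi2).symm
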